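/- For 0 < β < 1, the convolution of the Gaussian e^{−h²} with the Riesz kernel |·|^{−β} has the asymptotic behavior ∫_{−∞}^{∞} e^{−h²} |Z − h|^{−β} dh ∼ √π · Z^{−β} as Z → +∞; i.e., Z^β ∫_{−∞}^{∞} e^{−h²} |Z−h|^{−β} dh → √π. -/

import Mathlib

open Real MeasureTheory Filter Set

lemma absRpowII {β : ℝ} (hβ1 : β < 1) :
    IntervalIntegrable (fun u : ℝ => |u| ^ (-β)) volume (-1) 1 := by
  have h01 : IntervalIntegrable (fun u : ℝ => u ^ (-β)) volume 0 1 :=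
    intervalIntegral.intervalIntegrable_rpow' (by linarith)
  have h01' : IntervalIntegrable (fun u : ℝ => |u| ^ (-β)) volume 0 1 := by
    rw [intervalIntegrable_iff] at h01 ⊢
    exact h01.congr_fun (fun u hu => by
      rw [uIoc_of_le (by norm_num : (0:ℝ) ≤ 1)] at hu
      rw [abs_of_nonneg hu.1.le]) measurableSet_uIoc
  have h2 := (h01.comp_sub_left 0).symm
  norm_num at h2
  have hneg : IntervalIntegrable (fun u : ℝ => |u| ^ (-β)) volume (-1) 0 := by
    rw [intervalIntegrable_iff] at h2 ⊢
    exact h2.congr_fun (fun u hu => by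
      rw [uIoc_of_le (by norm_num : (-1:ℝ) ≤ 0)] at hu
      rw [abs_of_nonpos hu.2]) measurableSet_uIoc
  exact hneg.trans h01'


lemma riesz_on_Icc {β : ℝ} (hβ1 : β < 1) (Z : ℝ) :
    IntegrableOn (fun h : ℝ => |Z - h| ^ (-β)) (Icc (Z - 1) (Z + 1)) := by
  have h := (absRpowII hβ1).comp_sub_left Z
  rw [intervalIntegrable_iff] at h
  rw [integrableOn_Icc_iff_integrableOn_Ioc]
  rw [uIoc_comm, uIoc_of_le (by linarith : Z - 1 ≤ Z - -1)] at h
  have e : Z - -1 = Z + 1 := by ring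
  rwa [e] at h

lemma gauss_riesz_integrable {β : ℝ} (hβ0 : 0 < β) (hβ1 : β < 1) {c : ℝ} (hc : 0 < c) (Z : ℝ) :
    Integrable (fun h : ℝ => Real.exp (-(c * h ^ 2)) * |Z - h| ^ (-β)) := by
  have hgauss : Integrable (fun h : ℝ => Real.exp (-(c * h ^ 2))) := by
    have := integrable_exp_neg_mul_sq hc
    simpa [neg_mul] using this
  have hmeas : AEStronglyMeasurable (fun h : ℝ => Real.exp (-(c * h ^ 2)) * |Z - h| ^ (-β)) volume := by
    apply Measurable.aestronglyMeasurable
    fun_prop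
  refine Integrable.mono' (g := fun h => (Icc (Z - 1) (Z + 1)).indicator (fun h => |Z - h| ^ (-β)) h
      + Real.exp (-(c * h ^ 2))) ?_ hmeas (ae_of_all _ fun h => ?_)
  · exact ((riesz_on_Icc hβ1 Z).integrable_indicator measurableSet_Icc).add hgauss
  · rw [Real.norm_eq_abs, abs_of_nonneg (by positivity)]
    by_cases hmem : h ∈ Icc (Z - 1) (Z + 1)
    · simp only [indicator_of_mem hmem]
      have h1 : Real.exp (-(c * h ^ 2)) ≤ 1 := Real.exp_le_one_iff.mpr (neg_nonpos.mpr (by positivity))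
      nlinarith [Real.rpow_nonneg (abs_nonneg (Z - h)) (-β), Real.exp_pos (-(c * h ^ 2))]
    · simp only [indicator_of_notMem hmem]
      have habs : 1 ≤ |Z - h| := by
        rw [mem_Icc] at hmem
        push_neg at hmem
        rcases le_or_gt (Z - 1) h with h' | h'
        · have := hmem h'
          rw [abs_of_nonpos (by linarith)]; linarith
        · rw [abs_of_nonneg (by linarith)]; linarith
      have : |Z - h| ^ (-β) ≤ 1 := by
        have := Real.rpow_le_rpow_of_nonpos one_pos habs (neg_nonpos.mpr hβ0.le)
        simpa using this
      nlinarith [Real.exp_pos (-(c * h ^ 2)), Real.rpow_nonneg (abs_nonneg (Z - h)) (-β)]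


lemma indicator_integral_eq {β : ℝ} (Z : ℝ) :
    ∫ h : ℝ, (Icc (Z - 1) (Z + 1)).indicator (fun h => |Z - h| ^ (-β)) h
      = ∫ u in (-1:ℝ)..1, |u| ^ (-β) := by
  rw [integral_indicator measurableSet_Icc, integral_Icc_eq_integral_Ioc,
    ← intervalIntegral.integral_of_le (by linarith)]
  have := intervalIntegral.integral_comp_sub_left (a := Z - 1) (b := Z + 1)
    (fun u : ℝ => |u| ^ (-β)) Z
  rw [this]
  norm_num

lemma uniform_bound {β : ℝ} (hβ0 : 0 < β) (hβ1 : β < 1) (Z : ℝ) :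
    ∫ h : ℝ, Real.exp (-(1/2 * h ^ 2)) * |Z - h| ^ (-β)
      ≤ (∫ u in (-1:ℝ)..1, |u| ^ (-β)) + ∫ h : ℝ, Real.exp (-(1/2 * h ^ 2)) := by
  have hgauss : Integrable (fun h : ℝ => Real.exp (-(1/2 * h ^ 2))) := by
    simpa [neg_mul] using integrable_exp_neg_mul_sq (by norm_num : (0:ℝ) < 1/2)
  have hind : Integrable
      (fun h : ℝ => (Icc (Z - 1) (Z + 1)).indicator (fun h => |Z - h| ^ (-β)) h) :=
    (riesz_on_Icc hβ1 Z).integrable_indicator measurableSet_Icc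
  have hmono : ∫ h : ℝ, Real.exp (-(1/2 * h ^ 2)) * |Z - h| ^ (-β)
      ≤ ∫ h : ℝ, ((Icc (Z - 1) (Z + 1)).indicator (fun h => |Z - h| ^ (-β)) h
        + Real.exp (-(1/2 * h ^ 2))) := by
    apply integral_mono (gauss_riesz_integrable hβ0 hβ1 (by norm_num) Z) (hind.add hgauss)
    intro h
    simp only [Pi.add_apply]
    by_cases hmem : h ∈ Icc (Z - 1) (Z + 1)
    · simp only [indicator_of_mem hmem]
      have h1 : Real.exp (-(1/2 * h ^ 2)) ≤ 1 :=
        Real.exp_le_one_iff.mpr (neg_nonpos.mpr (by positivity))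
      nlinarith [Real.rpow_nonneg (abs_nonneg (Z - h)) (-β), Real.exp_pos (-(1/2 * h ^ 2))]
    · simp only [indicator_of_notMem hmem]
      have habs : 1 ≤ |Z - h| := by
        rw [mem_Icc] at hmem
        push_neg at hmem
        rcases le_or_gt (Z - 1) h with h' | h'
        · have := hmem h'
          rw [abs_of_nonpos (by linarith)]; linarith
        · rw [abs_of_nonneg (by linarith)]; linarith
      have h2 : |Z - h| ^ (-β) ≤ 1 := by
        simpa using Real.rpow_le_rpow_of_nonpos one_pos habs (neg_nonpos.mpr hβ0.le)
      nlinarith [Real.exp_pos (-(1/2 * h ^ 2)), Real.rpow_nonneg (abs_nonneg (Z - h)) (-β)]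
  calc ∫ h : ℝ, Real.exp (-(1/2 * h ^ 2)) * |Z - h| ^ (-β)
      ≤ ∫ h : ℝ, ((Icc (Z - 1) (Z + 1)).indicator (fun h => |Z - h| ^ (-β)) h
        + Real.exp (-(1/2 * h ^ 2))) := hmono
    _ = (∫ u in (-1:ℝ)..1, |u| ^ (-β)) + ∫ h : ℝ, Real.exp (-(1/2 * h ^ 2)) := by
        rw [integral_add hind hgauss, indicator_integral_eq]


lemma key_eq {β Z : ℝ} (hZ : 0 < Z) (h : ℝ) :
    Z ^ β * (Real.exp (-h ^ 2) * |Z - h| ^ (-β))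
      = Real.exp (-h ^ 2) * |1 - h / Z| ^ (-β) := by
  have h1 : |1 - h / Z| = |Z - h| / Z := by
    rw [show (1 : ℝ) - h / Z = (Z - h) / Z by field_simp, abs_div, abs_of_pos hZ]
  rw [h1, Real.div_rpow (abs_nonneg _) hZ.le, Real.rpow_neg hZ.le, div_eq_mul_inv, inv_inv]
  ring

theorem gaussian_riesz_convolution_asymptotic (β : ℝ) (hβ0 : 0 < β) (hβ1 : β < 1) :
    Tendsto (fun Z : ℝ => Z ^ β * ∫ h : ℝ, Real.exp (-h ^ 2) * |Z - h| ^ (-β))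
      atTop (nhds (Real.sqrt π)) := by
  have Iφ : ∀ Z : ℝ, Integrable (fun h : ℝ => Real.exp (-h ^ 2) * |Z - h| ^ (-β)) := by
    intro Z
    have := gauss_riesz_integrable hβ0 hβ1 one_pos Z
    simpa using this
  have Iφ' : ∀ Z : ℝ, Integrable (fun h : ℝ => Z ^ β * (Real.exp (-h ^ 2) * |Z - h| ^ (-β))) :=
    fun Z => (Iφ Z).const_mul _
  have key : ∀ Z : ℝ, Z ^ β * ∫ h : ℝ, Real.exp (-h ^ 2) * |Z - h| ^ (-β)
      = ∫ h : ℝ, Z ^ β * (Real.exp (-h ^ 2) * |Z - h| ^ (-β)) :=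
    fun Z => (integral_const_mul _ _).symm
  simp only [key]
  -- main term
  have hπ : (∫ h : ℝ, Real.exp (-h ^ 2)) = Real.sqrt π := by
    simpa using integral_gaussian 1
  have T1 : Tendsto (fun Z : ℝ => ∫ h in Icc (-(Z/2)) (Z/2),
      Z ^ β * (Real.exp (-h ^ 2) * |Z - h| ^ (-β))) atTop (nhds (Real.sqrt π)) := by
    rw [← hπ]
    simp only [← integral_indicator measurableSet_Icc]
    apply tendsto_integral_filter_of_dominated_convergence
      (bound := fun h : ℝ => 2 ^ β * Real.exp (-h ^ 2))
    · refine Eventually.of_forall fun Z => Measurable.aestronglyMeasurable ?_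
      apply Measurable.indicator ?_ measurableSet_Icc
      fun_prop
    · filter_upwards [eventually_ge_atTop (1:ℝ)] with Z hZ
      refine ae_of_all _ fun h => ?_
      by_cases hmem : h ∈ Icc (-(Z/2)) (Z/2)
      · rw [indicator_of_mem hmem, Real.norm_eq_abs, abs_of_nonneg (by positivity)]
        have hZ0 : (0:ℝ) < Z := by linarith
        obtain ⟨hm1, hm2⟩ := hmem
        have habs : Z / 2 ≤ |Z - h| := le_trans (by linarith) (le_abs_self _)
        have hr : |Z - h| ^ (-β) ≤ (Z / 2) ^ (-β) :=
          Real.rpow_le_rpow_of_nonpos (by positivity) habs (neg_nonpos.mpr hβ0.le)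
        have e1 : Z ^ β * (Z / 2) ^ (-β) = 2 ^ β := by
          rw [Real.rpow_neg (by positivity), ← div_eq_mul_inv,
            ← Real.div_rpow hZ0.le (by positivity)]
          congr 1
          field_simp
        calc Z ^ β * (Real.exp (-h ^ 2) * |Z - h| ^ (-β))
            = Real.exp (-h ^ 2) * (Z ^ β * |Z - h| ^ (-β)) := by ring
          _ ≤ Real.exp (-h ^ 2) * (Z ^ β * (Z / 2) ^ (-β)) := by
              have := mul_le_mul_of_nonneg_left hr (Real.rpow_nonneg hZ0.le β)
              exact mul_le_mul_of_nonneg_left this (Real.exp_nonneg _)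
          _ = 2 ^ β * Real.exp (-h ^ 2) := by rw [e1]; ring
      · rw [indicator_of_notMem hmem]
        simp [Real.exp_nonneg]
        positivity
    · have := integrable_exp_neg_mul_sq (one_pos)
      simp only [neg_mul, one_mul] at this
      exact this.const_mul _
    · refine ae_of_all _ fun h => ?_
      have hev : ∀ᶠ Z in atTop, (Icc (-(Z/2)) (Z/2)).indicator
          (fun h' => Z ^ β * (Real.exp (-h' ^ 2) * |Z - h'| ^ (-β))) h
          = Real.exp (-h ^ 2) * |1 - h / Z| ^ (-β) := by
        filter_upwards [eventually_ge_atTop (2 * |h| + 1)] with Z hZ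
        have hZ0 : (0:ℝ) < Z := by
          have := abs_nonneg h; linarith
        have hmem : h ∈ Icc (-(Z/2)) (Z/2) := by
          constructor
          · have := neg_abs_le h; linarith
          · have := le_abs_self h; linarith
        rw [indicator_of_mem hmem, key_eq hZ0]
      have hlim : Tendsto (fun Z : ℝ => Real.exp (-h ^ 2) * |1 - h / Z| ^ (-β))
          atTop (nhds (Real.exp (-h ^ 2))) := by
        have h0 : Tendsto (fun Z : ℝ => h / Z) atTop (nhds 0) :=
          tendsto_const_nhds.div_atTop tendsto_id
        have habs : Tendsto (fun Z : ℝ => |1 - h / Z|) atTop (nhds 1) := by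
          have := (tendsto_const_nhds (x := (1:ℝ)) (f := atTop)).sub h0
          have := this.abs
          simpa using this
        have hrp : Tendsto (fun Z : ℝ => |1 - h / Z| ^ (-β)) atTop (nhds 1) := by
          have c := (Real.continuousAt_rpow_const 1 (-β) (Or.inl one_ne_zero)).tendsto.comp habs
          simpa [Function.comp_def] using c
        have := (tendsto_const_nhds (x := Real.exp (-h ^ 2)) (f := atTop)).mul hrp
        simpa using this
      exact Tendsto.congr' (EventuallyEq.symm hev) hlim
  -- remainder term
  have T2 : Tendsto (fun Z : ℝ => ∫ h in (Icc (-(Z/2)) (Z/2))ᶜ,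
      Z ^ β * (Real.exp (-h ^ 2) * |Z - h| ^ (-β))) atTop (nhds 0) := by
    set C : ℝ := (∫ u in (-1:ℝ)..1, |u| ^ (-β)) + ∫ h : ℝ, Real.exp (-(1/2 * h ^ 2)) with hC
    have hC0 : 0 ≤ C := by
      apply add_nonneg
      · apply intervalIntegral.integral_nonneg (by norm_num)
        intro u hu
        positivity
      · apply integral_nonneg
        intro h
        positivity
    apply squeeze_zero' (g := fun Z : ℝ => (Z ^ β * Real.exp (-(1/8 * Z ^ 2))) * C)
    · filter_upwards [eventually_ge_atTop (1:ℝ)] with Z hZ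
      apply setIntegral_nonneg measurableSet_Icc.compl
      intro h _
      have hZ0 : (0:ℝ) < Z := by linarith
      positivity
    · filter_upwards [eventually_ge_atTop (1:ℝ)] with Z hZ
      have hZ0 : (0:ℝ) < Z := by linarith
      have step1 : ∫ h in (Icc (-(Z/2)) (Z/2))ᶜ,
          Z ^ β * (Real.exp (-h ^ 2) * |Z - h| ^ (-β))
          ≤ ∫ h in (Icc (-(Z/2)) (Z/2))ᶜ,
          (Z ^ β * Real.exp (-(1/8 * Z ^ 2))) * (Real.exp (-(1/2 * h ^ 2)) * |Z - h| ^ (-β)) := by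
        apply setIntegral_mono_on ((Iφ' Z).integrableOn)
          (((gauss_riesz_integrable hβ0 hβ1 (by norm_num : (0:ℝ) < 1/2) Z).const_mul
            _).integrableOn) measurableSet_Icc.compl
        intro h hmemc
        have hsq : Z ^ 2 / 4 ≤ h ^ 2 := by
          rw [mem_compl_iff, mem_Icc, not_and_or] at hmemc
          push_neg at hmemc
          rcases hmemc with h' | h' <;> nlinarith
        have hexp : Real.exp (-h ^ 2) ≤ Real.exp (-(1/8 * Z ^ 2)) * Real.exp (-(1/2 * h ^ 2)) := by
          rw [← Real.exp_add]
          apply Real.exp_le_exp.mpr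
          nlinarith
        calc Z ^ β * (Real.exp (-h ^ 2) * |Z - h| ^ (-β))
            ≤ Z ^ β * ((Real.exp (-(1/8 * Z ^ 2)) * Real.exp (-(1/2 * h ^ 2))) * |Z - h| ^ (-β)) := by
              have := mul_le_mul_of_nonneg_right hexp (Real.rpow_nonneg (abs_nonneg (Z - h)) (-β))
              exact mul_le_mul_of_nonneg_left this (Real.rpow_nonneg hZ0.le β)
          _ = (Z ^ β * Real.exp (-(1/8 * Z ^ 2))) * (Real.exp (-(1/2 * h ^ 2)) * |Z - h| ^ (-β)) := by
              ring
      have step2 : ∫ h in (Icc (-(Z/2)) (Z/2))ᶜ,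
          (Z ^ β * Real.exp (-(1/8 * Z ^ 2))) * (Real.exp (-(1/2 * h ^ 2)) * |Z - h| ^ (-β))
          ≤ ∫ h : ℝ, (Z ^ β * Real.exp (-(1/8 * Z ^ 2))) * (Real.exp (-(1/2 * h ^ 2)) * |Z - h| ^ (-β)) := by
        apply setIntegral_le_integral
          ((gauss_riesz_integrable hβ0 hβ1 (by norm_num : (0:ℝ) < 1/2) Z).const_mul _)
        refine ae_of_all _ fun h => ?_
        positivity
      have step3 : ∫ h : ℝ, (Z ^ β * Real.exp (-(1/8 * Z ^ 2))) * (Real.exp (-(1/2 * h ^ 2)) * |Z - h| ^ (-β))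
          = (Z ^ β * Real.exp (-(1/8 * Z ^ 2))) * ∫ h : ℝ, Real.exp (-(1/2 * h ^ 2)) * |Z - h| ^ (-β) :=
        integral_const_mul _ _
      have step4 : (Z ^ β * Real.exp (-(1/8 * Z ^ 2))) * (∫ h : ℝ, Real.exp (-(1/2 * h ^ 2)) * |Z - h| ^ (-β))
          ≤ (Z ^ β * Real.exp (-(1/8 * Z ^ 2))) * C :=
        mul_le_mul_of_nonneg_left (uniform_bound hβ0 hβ1 Z) (by positivity)
      linarith [step1, step2, step3.le, step3.ge, step4]
    · have hlittle := rpow_mul_exp_neg_mul_sq_isLittleO_exp_neg (by norm_num : (0:ℝ) < 1/8) β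
      have hexp0 : Tendsto (fun x : ℝ => Real.exp (-(1/2) * x)) atTop (nhds 0) := by
        have hh : Tendsto (fun x : ℝ => (1/2 : ℝ) * x) atTop atTop :=
          Tendsto.const_mul_atTop (by norm_num) tendsto_id
        have hcomp := Real.tendsto_exp_neg_atTop_nhds_zero.comp hh
        simp only [Function.comp_def] at hcomp
        apply hcomp.congr
        intro x
        ring_nf
      have h0 : Tendsto (fun Z : ℝ => Z ^ β * Real.exp (-(1/8 * Z ^ 2))) atTop (nhds 0) := by
        have := hlittle.trans_tendsto hexp0
        simpa [neg_mul] using this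
      have := h0.mul_const C
      simpa using this
  have := T1.add T2
  rw [add_zero] at this
  apply this.congr'
  filter_upwards [eventually_ge_atTop (1:ℝ)] with Z hZ
  exact integral_add_compl measurableSet_Icc (Iφ' Z)
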